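/- The average target hitting time H_j := ∑_{i=1}^n π(i) H_{ij} satisfies the spectral formula H_j = (1/π(j)) · ∑_{k=2}^{n} v_{k,j}²/(1 − λ_k), where π(i) = d_i/(2|E|). -/

import Mathlib

/-- The average target hitting time H_j := ∑_i π(i) H_{ij} satisfies H_j = (1/π(j)) · ∑_{k=2}^n v_{k,j}²/(1 − λ_k), where π(i) = d_i/(2|E|). -/
theorem stmt_6
    (n : ℕ) (hn : 2 ≤ n)
    (A : Matrix (Fin n) (Fin n) ℝ)
    (hsym : ∀ i j, A i j = A j i)
    (hnonneg : ∀ i j, 0 ≤ A i j)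
    (hdiag : ∀ i, A i i = 0)
    (d : Fin n → ℝ) (hd : ∀ i, d i = ∑ j, A i j)
    (hdpos : ∀ i, 0 < d i)
    (twoE : ℝ) (htwoE : twoE = ∑ i, d i)
    (B : Matrix (Fin n) (Fin n) ℝ)
    (hB : ∀ i j, B i j = A i j / (Real.sqrt (d i) * Real.sqrt (d j)))
    (lam : Fin n → ℝ) (v : Fin n → Fin n → ℝ)
    (hmono : Antitone lam)
    (hlam1 : lam ⟨0, by omega⟩ = 1)
    (heig : ∀ k, B.mulVec (v k) = lam k • v k)
    (horth : ∀ k l, (∑ x, v k x * v l x) = (if k = l then (1 : ℝ) else 0))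
    (hv1 : ∀ j, v ⟨0, by omega⟩ j = Real.sqrt (d j / twoE))
    (hgap : lam ⟨1, by omega⟩ < 1)
    (hconn : (SimpleGraph.fromRel fun i j : Fin n => 0 < A i j).Connected)
    (H : Fin n → Fin n → ℝ)
    (hH0 : ∀ j, H j j = 0)
    (hHrec : ∀ i j, i ≠ j → H i j = 1 + ∑ k, (A i k / d i) * H k j) :
    ∀ j, (∑ i, (d i / twoE) * H i j) =
      (twoE / d j) * ∑ k ∈ Finset.univ.filter (fun k : Fin n => k.val ≠ 0), (v k j) ^ 2 / (1 - lam k) := by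
  classical
  intro j
  have hn0 : 0 < n := by omega
  have hn1 : 1 < n := by omega
  set i0 : Fin n := ⟨0, hn0⟩ with hi0
  set i1 : Fin n := ⟨1, hn1⟩ with hi1
  have hgap' : lam i1 < 1 := hgap
  have hsq : ∀ i, Real.sqrt (d i) * Real.sqrt (d i) = d i :=
    fun i => Real.mul_self_sqrt (hdpos i).le
  have hspos : ∀ i, 0 < Real.sqrt (d i) := fun i => Real.sqrt_pos.2 (hdpos i)
  have htEpos : 0 < twoE := by
    rw [htwoE]
    exact Finset.sum_pos (fun i _ => hdpos i) ⟨i0, Finset.mem_univ _⟩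
  have htE : 0 < Real.sqrt twoE := Real.sqrt_pos.2 htEpos
  set s : Fin n → ℝ := fun i => Real.sqrt (d i) with hsdef
  -- s i = √twoE * v i0 i
  have hsv : ∀ i, s i = Real.sqrt twoE * v i0 i := by
    intro i
    rw [show v i0 i = Real.sqrt (d i / twoE) from hv1 i]
    rw [Real.sqrt_div (hdpos i).le]
    have : Real.sqrt twoE ≠ 0 := htE.ne'
    field_simp [hsdef]
    rfl
  -- column sums of A
  have hcol : ∀ k, (∑ i, A i k) = d k := by
    intro k
    rw [hd k]
    exact Finset.sum_congr rfl fun i _ => hsym i k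
  -- return-time identity
  have hrj : ∑ k, A j k * H k j = twoE - d j := by
    have key : (∑ i, ∑ k, A i k * H k j) = ∑ i, d i * H i j := by
      rw [Finset.sum_comm]
      refine Finset.sum_congr rfl fun k _ => ?_
      rw [← Finset.sum_mul, hcol]
    have hterm : ∀ i, d i * H i j - ∑ k, A i k * H k j =
        if i = j then -(∑ k, A j k * H k j) else d i := by
      intro i
      by_cases hij : i = j
      · subst hij; simp [hH0]
      · rw [if_neg hij]
        have hrec := hHrec i j hij
        calc d i * H i j - ∑ k, A i k * H k j
            = d i * (1 + ∑ k, (A i k / d i) * H k j) - ∑ k, A i k * H k j := by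
              rw [← hrec]
          _ = d i := by
              rw [mul_add, mul_one, Finset.mul_sum]
              have he : ∀ k, d i * ((A i k / d i) * H k j) = A i k * H k j := by
                intro k
                have : d i ≠ 0 := (hdpos i).ne'
                field_simp
              rw [Finset.sum_congr rfl fun k _ => he k]
              ring
    have hzero : ∑ i, (d i * H i j - ∑ k, A i k * H k j) = 0 := by
      rw [Finset.sum_sub_distrib, key, sub_self]
    rw [Finset.sum_congr rfl fun i _ => hterm i] at hzero
    have hsplit : ∀ i : Fin n, (if i = j then -(∑ k, A j k * H k j) else d i)
        = d i + (if i = j then (-(∑ k, A j k * H k j) - d j) else 0) := by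
      intro i
      by_cases h : i = j
      · subst h; simp
      · simp [h]
    rw [Finset.sum_congr rfl fun i _ => hsplit i, Finset.sum_add_distrib,
      Finset.sum_ite_eq' Finset.univ j, if_pos (Finset.mem_univ j), ← htwoE] at hzero
    linarith
  -- Claim 1: (I - B) applied to u, where u i = s i * H i j
  have hclaim1 : ∀ i, s i * H i j - ∑ k, B i k * (s k * H k j)
      = s i - (twoE / s j) * (if i = j then 1 else 0) := by
    intro i
    have hBu : ∑ k, B i k * (s k * H k j) = s i * ∑ k, (A i k / d i) * H k j := by
      rw [Finset.mul_sum]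
      refine Finset.sum_congr rfl fun k _ => ?_
      rw [hB i k]
      have h1 : s i ≠ 0 := (hspos i).ne'
      have h2 : s k ≠ 0 := (hspos k).ne'
      show A i k / (s i * s k) * (s k * H k j) = s i * (A i k / d i * H k j)
      rw [show d i = s i * s i from (hsq i).symm]
      field_simp
    rw [hBu]
    by_cases hij : i = j
    · subst hij
      rw [if_pos rfl, hH0 i]
      have hR : ∑ k, (A i k / d i) * H k i = (twoE - d i) / d i := by
        rw [eq_div_iff (hdpos i).ne', Finset.sum_mul]
        calc (∑ k, (A i k / d i) * H k i * d i) = ∑ k, A i k * H k i := by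
              refine Finset.sum_congr rfl fun k _ => ?_
              have : d i ≠ 0 := (hdpos i).ne'
              field_simp
          _ = twoE - d i := hrj
      rw [hR]
      show s i * 0 - s i * ((twoE - d i) / d i) = s i - twoE / s i * 1
      rw [show d i = s i * s i from (hsq i).symm]
      have h1 : s i ≠ 0 := (hspos i).ne'
      field_simp
      ring
    · rw [if_neg hij, hHrec i j hij]
      ring
  -- eigen relation pointwise
  have heig' : ∀ k i, ∑ l, B i l * v k l = lam k * v k i := by
    intro k i
    have := congrFun (heig k) i
    simpa [Matrix.mulVec, dotProduct] using this
  have hBsym : ∀ i l, B i l = B l i := by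
    intro i l
    rw [hB, hB, hsym, mul_comm]
  -- coefficients
  set c : Fin n → ℝ := fun k => ∑ x, v k x * (s x * H x j) with hc
  have hswap : ∀ k, ∑ i, v k i * (∑ l, B i l * (s l * H l j)) = lam k * c k := by
    intro k
    calc ∑ i, v k i * ∑ l, B i l * (s l * H l j)
        = ∑ i, ∑ l, v k i * B i l * (s l * H l j) := by
          refine Finset.sum_congr rfl fun i _ => ?_
          rw [Finset.mul_sum]
          exact Finset.sum_congr rfl fun l _ => by ring
      _ = ∑ l, ∑ i, v k i * B i l * (s l * H l j) := Finset.sum_comm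
      _ = ∑ l, (∑ i, B l i * v k i) * (s l * H l j) := by
          refine Finset.sum_congr rfl fun l _ => ?_
          rw [Finset.sum_mul]
          exact Finset.sum_congr rfl fun i _ => by rw [hBsym i l]; ring
      _ = ∑ l, (lam k * v k l) * (s l * H l j) := by
          exact Finset.sum_congr rfl fun l _ => by rw [heig' k l]
      _ = lam k * ∑ l, v k l * (s l * H l j) := by
          rw [Finset.mul_sum]
          exact Finset.sum_congr rfl fun l _ => by ring
      _ = lam k * c k := by rw [hc]
  have hck : ∀ k, (1 - lam k) * c k
      = (∑ i, v k i * s i) - (twoE / s j) * v k j := by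
    intro k
    have e1 : ∑ i, v k i * (s i * H i j - ∑ l, B i l * (s l * H l j))
        = (1 - lam k) * c k := by
      calc ∑ i, v k i * (s i * H i j - ∑ l, B i l * (s l * H l j))
          = ∑ i, (v k i * (s i * H i j) - v k i * (∑ l, B i l * (s l * H l j))) :=
            Finset.sum_congr rfl fun i _ => by ring
        _ = (∑ i, v k i * (s i * H i j)) - ∑ i, v k i * (∑ l, B i l * (s l * H l j)) :=
            Finset.sum_sub_distrib _ _
        _ = c k - lam k * c k := by rw [hswap k, hc]
        _ = (1 - lam k) * c k := by ring
    rw [← e1, Finset.sum_congr rfl fun i _ => by rw [hclaim1 i]]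
    have e2 : ∀ i : Fin n, v k i * (s i - (twoE / s j) * (if i = j then 1 else 0))
        = v k i * s i - (if i = j then (twoE / s j) * v k j else 0) := by
      intro i
      by_cases h : i = j
      · subst h; simp; ring
      · simp [h]
    rw [Finset.sum_congr rfl fun i _ => e2 i, Finset.sum_sub_distrib,
      Finset.sum_ite_eq' Finset.univ j, if_pos (Finset.mem_univ j)]
  have hvs : ∀ k, ∑ i, v k i * s i = Real.sqrt twoE * (if k = i0 then (1:ℝ) else 0) := by
    intro k
    calc ∑ i, v k i * s i = ∑ i, Real.sqrt twoE * (v k i * v i0 i) := by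
          refine Finset.sum_congr rfl fun i _ => ?_
          rw [hsv i]; ring
      _ = Real.sqrt twoE * ∑ i, v k i * v i0 i := by rw [Finset.mul_sum]
      _ = Real.sqrt twoE * (if k = i0 then 1 else 0) := by rw [horth k i0]
  -- small eigenvalues
  have hlamlt : ∀ k : Fin n, k ≠ i0 → lam k < 1 := by
    intro k hk
    have hkv : 1 ≤ k.val := by
      rcases Nat.eq_zero_or_pos k.val with h | h
      · exact absurd (Fin.ext h) hk
      · omega
    have h1 : i1 ≤ k := hkv
    exact lt_of_le_of_lt (hmono h1) hgap'
  have hckval : ∀ k, k ≠ i0 → c k = -((twoE / s j) * v k j) / (1 - lam k) := by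
    intro k hk
    have h1 : (1:ℝ) - lam k ≠ 0 := sub_ne_zero.mpr (hlamlt k hk).ne'
    have h2 := hck k
    rw [hvs k, if_neg hk] at h2
    rw [eq_div_iff h1]
    linarith [h2]
  -- completeness
  have hcomp : ∀ x y : Fin n, (∑ k, v k x * v k y) = if x = y then (1:ℝ) else 0 := by
    have h1 : (Matrix.of v) * (Matrix.of v).transpose = (1 : Matrix (Fin n) (Fin n) ℝ) := by
      ext k l
      rw [Matrix.mul_apply]
      simp only [Matrix.transpose_apply, Matrix.of_apply]
      rw [horth k l]
      simp [Matrix.one_apply]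
    have h2 := mul_eq_one_comm.mp h1
    intro x y
    have h3 := congrFun (congrFun h2 x) y
    rw [Matrix.mul_apply] at h3
    simp only [Matrix.transpose_apply, Matrix.of_apply] at h3
    rw [h3]
    simp [Matrix.one_apply]
  -- u j = 0 gives the key linear relation
  have hsum0 : ∑ k, c k * v k j = 0 := by
    calc ∑ k, c k * v k j
        = ∑ k, ∑ x, (s x * H x j) * (v k x * v k j) := by
          refine Finset.sum_congr rfl fun k _ => ?_
          rw [hc, Finset.sum_mul]
          exact Finset.sum_congr rfl fun x _ => by ring
      _ = ∑ x, ∑ k, (s x * H x j) * (v k x * v k j) := Finset.sum_comm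
      _ = ∑ x, (s x * H x j) * (∑ k, v k x * v k j) := by
          refine Finset.sum_congr rfl fun x _ => ?_
          rw [Finset.mul_sum]
      _ = ∑ x, (if x = j then s x * H x j else 0) := by
          refine Finset.sum_congr rfl fun x _ => ?_
          rw [hcomp x j]
          by_cases h : x = j <;> simp [h]
      _ = s j * H j j := by
          rw [Finset.sum_ite_eq' Finset.univ j, if_pos (Finset.mem_univ j)]
      _ = 0 := by rw [hH0]; ring
  -- LHS in terms of c i0
  have hLHS : ∑ i, (d i / twoE) * H i j = c i0 / Real.sqrt twoE := by
    have ht2 : Real.sqrt twoE * Real.sqrt twoE = twoE := Real.mul_self_sqrt htEpos.le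
    have hpt : ∀ i, (d i / twoE) * H i j = (v i0 i * (s i * H i j)) / Real.sqrt twoE := by
      intro i
      have hvi : Real.sqrt twoE * v i0 i = s i := (hsv i).symm
      rw [div_mul_eq_mul_div, div_eq_div_iff htEpos.ne' htE.ne']
      linear_combination (-(H i j * Real.sqrt twoE)) * hsq i +
        (v i0 i * s i * H i j) * ht2 + (-(H i j * Real.sqrt twoE * s i)) * hvi
    calc ∑ i, (d i / twoE) * H i j
        = ∑ i, (v i0 i * (s i * H i j)) / Real.sqrt twoE :=
          Finset.sum_congr rfl fun i _ => hpt i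
      _ = (∑ i, v i0 i * (s i * H i j)) / Real.sqrt twoE := by rw [Finset.sum_div]
      _ = c i0 / Real.sqrt twoE := by rw [hc]
  -- filter = erase
  have hfilter : Finset.univ.filter (fun k : Fin n => k.val ≠ 0) = Finset.univ.erase i0 := by
    ext k
    simp [Finset.mem_filter, Finset.mem_erase, Fin.ext_iff, hi0]
  set S : ℝ := ∑ k ∈ Finset.univ.erase i0, v k j ^ 2 / (1 - lam k) with hS
  have hsumerase : ∑ k ∈ Finset.univ.erase i0, c k * v k j = -((twoE / s j) * S) := by
    have hpt : ∀ k ∈ Finset.univ.erase i0,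
        c k * v k j = -((twoE / s j) * (v k j ^ 2 / (1 - lam k))) := by
      intro k hk
      have hk' : k ≠ i0 := (Finset.mem_erase.mp hk).1
      have h1 : (1:ℝ) - lam k ≠ 0 := sub_ne_zero.mpr (hlamlt k hk').ne'
      rw [hckval k hk']
      field_simp
    rw [Finset.sum_congr rfl hpt, hS, Finset.mul_sum, ← Finset.sum_neg_distrib]
  have hfin : c i0 * v i0 j = (twoE / s j) * S := by
    have hx := Finset.sum_erase_add Finset.univ (fun k => c k * v k j) (Finset.mem_univ i0)
    rw [hsum0, hsumerase] at hx
    linarith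
  have hkey : c i0 * d j = Real.sqrt twoE * (twoE * S) := by
    have hvj : Real.sqrt twoE * v i0 j = s j := (hsv j).symm
    have h1 : s j ≠ 0 := (hspos j).ne'
    calc c i0 * d j = (c i0 * v i0 j) * Real.sqrt twoE * s j := by
          linear_combination (-(c i0)) * hsq j + (-(c i0 * s j)) * hvj
      _ = ((twoE / s j) * S) * Real.sqrt twoE * s j := by rw [hfin]
      _ = Real.sqrt twoE * (twoE * S) := by field_simp
  rw [hLHS, hfilter, ← hS, div_eq_iff htE.ne']
  have h1 : d j ≠ 0 := (hdpos j).ne'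
  field_simp
  linear_combination hkey
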